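/- Let ε_1, …, ε_m be i.i.d. random variables uniform on {−1, +1}, and for 0 ≤ j ≤ m let V⁺(j) = #{i ≤ j : ε_i = +1} and V⁻(j) = j − V⁺(j). For 0 ≤ i ≤ m define M_i = V⁺(m − i) / (1 + V⁻(m − i)) and let F_i be the σ-algebra generated by V⁺(m − i) together with ε_{m−i+1}, …, ε_m. Then (M_i)_{0 ≤ i ≤ m} is a supermartingale with respect to the filtration (F_i), and for every stopping time T with respect to (F_i) taking values in {0, …, m}, E[ M_T ] ≤ 1. -/

import Mathlib

open MeasureTheory Finset

/-- `V⁺(j)`: the number of the first `j` signs `ε_1, …, ε_j` that equal `+1`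
(with 1-based sign `ε_i` modelled as the 0-based entry `ε ⟨i-1⟩`). -/
def Vplus {Ω : Type*} {m : ℕ} (ε : Fin m → Ω → ℤ) (j : ℕ) (ω : Ω) : ℕ :=
  (univ.filter fun i : Fin m => (i : ℕ) < j ∧ ε i ω = 1).card

/-- `V⁻(j) = j − V⁺(j)`: the number of the first `j` signs that equal `−1`. -/
def Vminus {Ω : Type*} {m : ℕ} (ε : Fin m → Ω → ℤ) (j : ℕ) (ω : Ω) : ℕ :=
  j - Vplus ε j ω

namespace SignRatioAux

variable {m : ℕ}

def Sgn (m : ℕ) : Finset (Fin m → ℤ) := Fintype.piFinset fun _ => ({-1, 1} : Finset ℤ)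

def vp (u : Fin m → ℤ) (j : ℕ) : ℕ :=
  (univ.filter fun i : Fin m => (i : ℕ) < j ∧ u i = 1).card

lemma vp_le (u : Fin m → ℤ) (j : ℕ) : vp u j ≤ j := by
  classical
  have h := card_le_card_of_injOn (s := univ.filter fun i : Fin m => (i : ℕ) < j ∧ u i = 1)
    (t := range j) (fun i => (i : ℕ))
    (by intro i hi; simp only [coe_filter, mem_coe, mem_filter, Set.mem_setOf_eq] at hi; simpa using hi.2.1)
    (by intro a _ b _ h; exact Fin.ext h)
  simpa [vp] using h

lemma vp_as_sum (u : Fin m → ℤ) (j : ℕ) :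
    vp u j = ∑ i : Fin m, if (i : ℕ) < j ∧ u i = 1 then 1 else 0 := by
  classical
  rw [vp, card_filter]

lemma vp_succ (u : Fin m → ℤ) (j : ℕ) (hj : j < m) :
    vp u (j + 1) = vp u j + (if u ⟨j, hj⟩ = 1 then 1 else 0) := by
  classical
  rw [vp_as_sum, vp_as_sum]
  have key : ∀ i : Fin m,
      (if (i : ℕ) < j + 1 ∧ u i = 1 then (1:ℕ) else 0)
        = (if (i : ℕ) < j ∧ u i = 1 then 1 else 0)
          + (if i = ⟨j, hj⟩ then (if u i = 1 then 1 else 0) else 0) := by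
    intro i
    by_cases hij : (i : ℕ) < j
    · have h1 : (i : ℕ) < j + 1 := Nat.lt_succ_of_lt hij
      have h2 : i ≠ ⟨j, hj⟩ := by
        intro h; rw [h] at hij; simp at hij
      simp [h1, hij, h2]
    · by_cases hie : i = ⟨j, hj⟩
      · subst hie
        simp [Nat.lt_succ_self]
      · have : ¬ ((i : ℕ) < j + 1) := by
          intro h
          rcases Nat.lt_succ_iff_lt_or_eq.1 h with h' | h'
          · exact hij h'
          · exact hie (Fin.ext h')
        simp [this, hij, hie]
  rw [Finset.sum_congr rfl (fun i _ => key i), Finset.sum_add_distrib,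
    Finset.sum_ite_eq' univ (⟨j, hj⟩ : Fin m) (fun i => if u i = 1 then 1 else 0)]
  simp

end SignRatioAux

namespace SignRatioAux
variable {m : ℕ}

def psi (n : ℕ) (u : Fin m → ℤ) : ℕ × (Fin m → ℤ) :=
  (vp u n, fun j => if n ≤ (j : ℕ) then u j else 0)

lemma vp_comp_perm (u : Fin m → ℤ) (σ : Equiv.Perm (Fin m)) (j : ℕ)
    (hσ : ∀ i : Fin m, (i : ℕ) < j ↔ ((σ i : Fin m) : ℕ) < j) :
    vp (u ∘ σ) j = vp u j := by
  classical
  apply Finset.card_bij (fun i _ => σ i)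
  · intro i hi
    simp only [mem_filter, mem_univ, true_and, Function.comp_apply] at hi ⊢
    exact ⟨(hσ i).1 hi.1, hi.2⟩
  · intro a ha b hb hab
    exact σ.injective hab
  · intro b hb
    simp only [mem_filter, mem_univ, true_and, Function.comp_apply] at hb ⊢
    refine ⟨σ⁻¹ b, ⟨?_, ?_⟩, by simp⟩
    · have := hσ (σ⁻¹ b)
      rw [show σ (σ⁻¹ b) = b from σ.apply_symm_apply b] at this
      apply this.2
      simpa using hb.1
    · simp [hb.2]

end SignRatioAux

namespace SignRatioAux
variable {m : ℕ}

lemma swap_lt_iff {n : ℕ} (k l : Fin m) (hk : (k : ℕ) < n) (hl : (l : ℕ) < n) (i : Fin m) :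
    (i : ℕ) < n ↔ ((Equiv.swap k l i : Fin m) : ℕ) < n := by
  rcases eq_or_ne i k with rfl | hik
  · simp [Equiv.swap_apply_left, hk, hl]
  rcases eq_or_ne i l with rfl | hil
  · simp [Equiv.swap_apply_right, hk, hl]
  · rw [Equiv.swap_apply_of_ne_of_ne hik hil]

lemma psi_comp_swap {n : ℕ} (u : Fin m → ℤ) (k l : Fin m) (hk : (k : ℕ) < n)
    (hl : (l : ℕ) < n) : psi n (u ∘ Equiv.swap k l) = psi n u := by
  unfold psi
  refine Prod.ext ?_ ?_
  · exact vp_comp_perm u _ n (swap_lt_iff k l hk hl)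
  · funext j
    dsimp only
    by_cases hj : n ≤ (j : ℕ)
    · simp only [hj, if_true, Function.comp_apply]
      rw [Equiv.swap_apply_of_ne_of_ne]
      · intro h; subst h; omega
      · intro h; subst h; omega
    · simp [hj]

lemma comp_swap_mem_Sgn (u : Fin m → ℤ) (hu : u ∈ Sgn m) (k l : Fin m) :
    u ∘ Equiv.swap k l ∈ Sgn m := by
  simp only [Sgn, Fintype.mem_piFinset] at hu ⊢
  intro i; exact hu _

lemma count_coord_eq {n : ℕ} (a : ℕ × (Fin m → ℤ)) (k l : Fin m) (hk : (k : ℕ) < n)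
    (hl : (l : ℕ) < n) :
    ((Sgn m).filter fun u => psi n u = a ∧ u k = 1).card
      = ((Sgn m).filter fun u => psi n u = a ∧ u l = 1).card := by
  classical
  apply Finset.card_bij' (fun u _ => u ∘ Equiv.swap k l) (fun u _ => u ∘ Equiv.swap k l)
  · intro u hu
    simp only [mem_filter] at hu ⊢
    refine ⟨comp_swap_mem_Sgn u hu.1 k l, ?_, ?_⟩
    · rw [psi_comp_swap u k l hk hl]; exact hu.2.1
    · simpa using hu.2.2
  · intro u hu
    simp only [mem_filter] at hu ⊢
    refine ⟨comp_swap_mem_Sgn u hu.1 k l, ?_, ?_⟩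
    · rw [psi_comp_swap u k l hk hl]; exact hu.2.1
    · simpa using hu.2.2
  · intro u _
    funext i; simp
  · intro u _
    funext i; simp

lemma card_lt_filter {n : ℕ} (h2 : n ≤ m) :
    ((univ : Finset (Fin m)).filter fun k : Fin m => (k : ℕ) < n).card = n := by
  classical
  have h : ((univ : Finset (Fin m)).filter fun k : Fin m => (k : ℕ) < n).card
      = (range n).card := by
    refine Finset.card_bij (fun (k : Fin m) _ => (k : ℕ)) ?_ ?_ ?_
    · intro k hk; simp only [mem_filter] at hk; simpa using hk.2
    · intro a _ b _ h; exact Fin.ext h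
    · intro b hb
      simp only [mem_range] at hb
      exact ⟨⟨b, lt_of_lt_of_le hb h2⟩, by simp [hb], rfl⟩
  simpa using h

lemma vp_eq_sum_lt (u : Fin m → ℤ) (n : ℕ) :
    vp u n = ∑ k ∈ (univ : Finset (Fin m)).filter (fun k : Fin m => (k : ℕ) < n),
      (if u k = 1 then 1 else 0) := by
  classical
  rw [vp_as_sum, Finset.sum_filter]
  congr 1
  funext i
  by_cases h : (i : ℕ) < n <;> simp [h]

lemma n_mul_card {n : ℕ} (a : ℕ × (Fin m → ℤ)) (l : Fin m) (hl : (l : ℕ) < n) (h2 : n ≤ m) :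
    n * ((Sgn m).filter fun u => psi n u = a ∧ u l = 1).card
      = a.1 * ((Sgn m).filter fun u => psi n u = a).card := by
  classical
  have hsplit : ∀ k : Fin m,
      ((Sgn m).filter fun u => psi n u = a ∧ u k = 1).card
        = ∑ u ∈ (Sgn m).filter (fun u => psi n u = a), (if u k = 1 then 1 else 0) := by
    intro k
    rw [Finset.sum_filter]
    rw [card_filter]
    congr 1
    funext u
    by_cases h1 : psi n u = a <;> by_cases h2 : u k = 1 <;> simp [h1, h2]
  calc n * ((Sgn m).filter fun u => psi n u = a ∧ u l = 1).card
      = ∑ _k ∈ (univ : Finset (Fin m)).filter (fun k : Fin m => (k : ℕ) < n),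
          ((Sgn m).filter fun u => psi n u = a ∧ u l = 1).card := by
        rw [Finset.sum_const, card_lt_filter h2, smul_eq_mul]
    _ = ∑ k ∈ (univ : Finset (Fin m)).filter (fun k : Fin m => (k : ℕ) < n),
          ((Sgn m).filter fun u => psi n u = a ∧ u k = 1).card := by
        apply Finset.sum_congr rfl
        intro k hk
        simp only [mem_filter] at hk
        exact count_coord_eq a l k hl hk.2
    _ = ∑ k ∈ (univ : Finset (Fin m)).filter (fun k : Fin m => (k : ℕ) < n),
          ∑ u ∈ (Sgn m).filter (fun u => psi n u = a), (if u k = 1 then 1 else 0) := by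
        exact Finset.sum_congr rfl fun k _ => hsplit k
    _ = ∑ u ∈ (Sgn m).filter (fun u => psi n u = a),
          ∑ k ∈ (univ : Finset (Fin m)).filter (fun k : Fin m => (k : ℕ) < n),
            (if u k = 1 then 1 else 0) := Finset.sum_comm
    _ = ∑ u ∈ (Sgn m).filter (fun u => psi n u = a), vp u n := by
        exact Finset.sum_congr rfl fun u _ => (vp_eq_sum_lt u n).symm
    _ = ∑ u ∈ (Sgn m).filter (fun u => psi n u = a), a.1 := by
        apply Finset.sum_congr rfl
        intro u hu
        simp only [mem_filter] at hu
        have := hu.2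
        rw [← this]
        rfl
    _ = a.1 * ((Sgn m).filter fun u => psi n u = a).card := by
        rw [Finset.sum_const, smul_eq_mul, mul_comm]

end SignRatioAux

namespace SignRatioAux
variable {m : ℕ}

noncomputable def gf (n v : ℕ) : ℝ := if v = n then (n : ℝ) - 1 else (v : ℝ) / (1 + (n : ℝ) - v)

lemma fiber_sum {n : ℕ} (h1 : 1 ≤ n) (h2 : n ≤ m) (a : ℕ × (Fin m → ℤ)) :
    ∑ u ∈ (Sgn m).filter (fun u => psi n u = a),
        ((vp u (n - 1) : ℝ) / (1 + ((n - 1 - vp u (n - 1) : ℕ) : ℝ)))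
      = ∑ u ∈ (Sgn m).filter (fun u => psi n u = a), gf n (vp u n) := by
  classical
  obtain ⟨v, t⟩ := a
  have hlm : n - 1 < m := by omega
  set l : Fin m := ⟨n - 1, hlm⟩ with hl
  have hvp_eq : ∀ u ∈ (Sgn m).filter (fun u => psi n u = (v, t)), vp u n = v := by
    intro u hu
    simp only [mem_filter] at hu
    exact congrArg Prod.fst hu.2
  have hstep : ∀ u : Fin m → ℤ, vp u n = vp u (n - 1) + (if u l = 1 then 1 else 0) := by
    intro u
    have := vp_succ u (n - 1) hlm
    rwa [show n - 1 + 1 = n by omega] at this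
  rcases Finset.eq_empty_or_nonempty ((Sgn m).filter (fun u => psi n u = (v, t))) with hE | hNE
  · rw [hE]; simp
  obtain ⟨u₀, hu₀⟩ := hNE
  have hvn : v ≤ n := by rw [← hvp_eq u₀ hu₀]; exact vp_le u₀ n
  have hval1 : ∀ u ∈ ((Sgn m).filter (fun u => psi n u = (v, t))).filter (fun u => u l = 1),
      ((vp u (n - 1) : ℝ) / (1 + ((n - 1 - vp u (n - 1) : ℕ) : ℝ)))
        = ((v - 1 : ℕ) : ℝ) / (1 + ((n - v : ℕ) : ℝ)) := by
    intro u hu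
    simp only [mem_filter] at hu
    have h3 := hstep u
    rw [hvp_eq u (by simp only [mem_filter]; exact hu.1), hu.2, if_pos rfl] at h3
    have h4 : vp u (n - 1) = v - 1 := by omega
    rw [h4, show n - 1 - (v - 1) = n - v by omega]
  have hval0 : ∀ u ∈ ((Sgn m).filter (fun u => psi n u = (v, t))).filter (fun u => ¬ u l = 1),
      ((vp u (n - 1) : ℝ) / (1 + ((n - 1 - vp u (n - 1) : ℕ) : ℝ)))
        = (v : ℝ) / (1 + ((n - 1 - v : ℕ) : ℝ)) := by
    intro u hu
    simp only [mem_filter] at hu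
    have h3 := hstep u
    rw [hvp_eq u (by simp only [mem_filter]; exact hu.1), if_neg hu.2] at h3
    have h4 : vp u (n - 1) = v := by omega
    rw [h4]
  have hcount0 : n * (((Sgn m).filter (fun u => psi n u = (v, t))).filter
        (fun u => u l = 1)).card
      = v * ((Sgn m).filter (fun u => psi n u = (v, t))).card := by
    have h := n_mul_card (v, t) l (Nat.sub_lt (by omega) (by omega)) h2
    rw [Finset.filter_filter]
    exact h
  have hsplit := Finset.sum_filter_add_sum_filter_not ((Sgn m).filter (fun u => psi n u = (v, t)))
      (fun u => u l = 1)
      (fun u => ((vp u (n - 1) : ℝ) / (1 + ((n - 1 - vp u (n - 1) : ℕ) : ℝ))))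
  have hcard := Finset.card_filter_add_card_filter_not
    (s := (Sgn m).filter (fun u => psi n u = (v, t))) (fun u => u l = 1)
  rw [← hsplit, Finset.sum_congr rfl hval1, Finset.sum_congr rfl hval0,
    Finset.sum_const, Finset.sum_const,
    Finset.sum_congr rfl (fun u hu => by rw [hvp_eq u hu]), Finset.sum_const]
  simp only [nsmul_eq_mul]
  generalize hgc1 : (((Sgn m).filter (fun u => psi n u = (v, t))).filter
      (fun u => u l = 1)).card = c1 at hcount0 hcard ⊢
  generalize hgc0 : (((Sgn m).filter (fun u => psi n u = (v, t))).filter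
      (fun u => ¬ u l = 1)).card = c0 at hcard ⊢
  generalize hgcF : ((Sgn m).filter (fun u => psi n u = (v, t))).card = cF at hcount0 hcard ⊢
  clear hgc1 hgc0 hgcF hsplit hval1 hval0 hvp_eq hstep hu₀ hl
  rcases eq_or_lt_of_le hvn with rfl | hvlt
  · -- v = n
    have hc00 : c0 = 0 := by
      rw [← hcard] at hcount0
      have := Nat.eq_of_mul_eq_mul_left (show 0 < v by omega) hcount0
      omega
    rw [← hcard, hc00, gf, if_pos rfl, show v - v = 0 by omega]
    push_cast [Nat.cast_sub h1]
    ring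
  · -- v < n
    rw [gf, if_neg (by omega), ← hcard]
    rcases Nat.eq_zero_or_pos v with rfl | hv1
    · have hc10 : c1 = 0 := by
        rcases Nat.mul_eq_zero.1 (by simpa using hcount0) with h | h
        · omega
        · exact h
      rw [hc10]
      simp
    · have hcast : ((v - 1 : ℕ) : ℝ) = (v : ℝ) - 1 := by
        rw [Nat.cast_sub hv1]; norm_num
      have hcast2 : ((n - v : ℕ) : ℝ) = (n : ℝ) - v := by
        rw [Nat.cast_sub (le_of_lt hvlt)]
      have hcast3 : ((n - 1 - v : ℕ) : ℝ) = (n : ℝ) - 1 - v := by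
        rw [Nat.cast_sub (by omega : v ≤ n - 1), Nat.cast_sub h1]; norm_num
      rw [hcast, hcast2, hcast3]
      have hvR : (v : ℝ) < n := by exact_mod_cast hvlt
      have hd1 : (1 : ℝ) + ((n : ℝ) - v) ≠ 0 := by nlinarith
      have hd1' : (1 : ℝ) + (n : ℝ) - v ≠ 0 := by nlinarith
      have hE : (n : ℝ) - v ≠ 0 := sub_ne_zero.2 (ne_of_gt hvR)
      have e0 : (1 : ℝ) + ((n : ℝ) - 1 - v) = (n : ℝ) - v := by ring
      rw [e0]
      have hcountR : (n : ℝ) * c1 = (v : ℝ) * ((c1 : ℝ) + c0) := by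
        rw [← hcard] at hcount0
        exact_mod_cast hcount0
      push_cast
      field_simp
      linear_combination ((v : ℝ) - n - 1) * hcountR

end SignRatioAux

namespace SignRatioAux
variable {m : ℕ}

lemma mem_Sgn_iff {u : Fin m → ℤ} : u ∈ Sgn m ↔ ∀ i, u i = -1 ∨ u i = 1 := by
  simp [Sgn, Fintype.mem_piFinset]

lemma card_vp_eq (v : ℕ) :
    ((Sgn m).filter (fun u => vp u m = v)).card
      = ((univ : Finset (Fin m)).powersetCard v).card := by
  classical
  have hvp_full : ∀ u : Fin m → ℤ, vp u m = (univ.filter fun i : Fin m => u i = 1).card := by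
    intro u
    unfold vp
    congr 1
    apply Finset.filter_congr
    intro i _
    simp [i.isLt]
  apply Finset.card_bij' (fun u _ => univ.filter fun i : Fin m => u i = 1)
    (fun A _ => fun i : Fin m => if i ∈ A then (1 : ℤ) else -1)
  · intro u hu
    simp only [mem_filter] at hu
    rw [Finset.mem_powersetCard]
    exact ⟨Finset.subset_univ _, by rw [← hvp_full u]; exact hu.2⟩
  · intro A hA
    rw [Finset.mem_powersetCard] at hA
    simp only [mem_filter]
    constructor
    · rw [mem_Sgn_iff]
      intro i
      by_cases h : i ∈ A <;> simp [h]
    · rw [hvp_full, ← hA.2]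
      congr 1
      ext i
      by_cases h : i ∈ A <;> simp [h]
  · intro u hu
    simp only [mem_filter] at hu
    funext i
    have := (mem_Sgn_iff.1 hu.1) i
    by_cases h : u i = 1 <;> simp [h]
    omega
  · intro A hA
    ext i
    by_cases h : i ∈ A <;> simp [h]

lemma sum_M0_le :
    ∑ u ∈ Sgn m, (vp u m : ℝ) / (1 + ((m - vp u m : ℕ) : ℝ)) ≤ 2 ^ m := by
  classical
  have hmaps : ∀ u ∈ Sgn m, vp u m ∈ range (m + 1) := by
    intro u _
    rw [mem_range]
    exact Nat.lt_succ_of_le (vp_le u m)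
  rw [← Finset.sum_fiberwise_of_maps_to hmaps
    (fun u => (vp u m : ℝ) / (1 + ((m - vp u m : ℕ) : ℝ)))]
  have hterm : ∀ v ∈ range (m + 1),
      ∑ u ∈ (Sgn m).filter (fun u => vp u m = v),
          (vp u m : ℝ) / (1 + ((m - vp u m : ℕ) : ℝ))
        = (if v = 0 then 0 else (m.choose (v - 1) : ℝ)) := by
    intro v hv
    rw [mem_range, Nat.lt_succ_iff] at hv
    have hconst : ∀ u ∈ (Sgn m).filter (fun u => vp u m = v),
        (vp u m : ℝ) / (1 + ((m - vp u m : ℕ) : ℝ))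
          = (v : ℝ) / (1 + ((m - v : ℕ) : ℝ)) := by
      intro u hu
      simp only [mem_filter] at hu
      rw [hu.2]
    rw [Finset.sum_congr rfl hconst, Finset.sum_const, card_vp_eq,
      Finset.card_powersetCard, Finset.card_univ, Fintype.card_fin, nsmul_eq_mul]
    rcases Nat.eq_zero_or_pos v with rfl | hv1
    · simp
    · rw [if_neg (by omega)]
      obtain ⟨k, rfl⟩ := Nat.exists_eq_add_of_le hv1
      have hd : ((m - (1 + k) : ℕ) : ℝ) + 1 = ((m - k : ℕ) : ℝ) := by
        have : m - (1 + k) + 1 = m - k := by omega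
        exact_mod_cast congrArg (Nat.cast : ℕ → ℝ) this
      have hchoose : (m.choose (1 + k) : ℝ) * ((1 + k : ℕ) : ℝ)
          = (m.choose k : ℝ) * ((m - k : ℕ) : ℝ) := by
        have h := Nat.choose_succ_right_eq m k
        rw [show k + 1 = 1 + k by omega] at h
        exact_mod_cast congrArg (Nat.cast : ℕ → ℝ) h
      have hdne : ((m - k : ℕ) : ℝ) ≠ 0 := by
        have : 1 ≤ m - k := by omega
        have : (1 : ℝ) ≤ ((m - k : ℕ) : ℝ) := by exact_mod_cast this
        linarith
      rw [show (1 : ℝ) + ((m - (1 + k) : ℕ) : ℝ) = ((m - (1 + k) : ℕ) : ℝ) + 1 by ring, hd]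
      rw [mul_div_assoc']
      rw [div_eq_iff hdne]
      rw [show (1 + k : ℕ) - 1 = k by omega]
      push_cast at hchoose ⊢
      linarith [hchoose]
  rw [Finset.sum_congr rfl hterm]
  rw [Finset.sum_range_succ']
  have e0 : (if (0:ℕ) = 0 then (0:ℝ) else (m.choose (0-1) : ℝ)) = 0 := by simp
  rw [e0, add_zero]
  have : ∑ i ∈ range m, (if (i+1) = 0 then (0:ℝ) else ((m.choose (i + 1 - 1)) : ℝ))
      = ∑ i ∈ range m, ((m.choose i) : ℝ) := by
    apply Finset.sum_congr rfl
    intro i _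
    rw [if_neg (Nat.succ_ne_zero i), show i + 1 - 1 = i by omega]
  rw [this]
  have hsum : ∑ i ∈ range m, m.choose i ≤ 2 ^ m := by
    have h := Nat.sum_range_choose m
    have h2 := Finset.sum_range_succ (fun i => m.choose i) m
    omega
  calc ∑ i ∈ range m, ((m.choose i) : ℝ) = ((∑ i ∈ range m, m.choose i : ℕ) : ℝ) := by push_cast; ring
    _ ≤ ((2 ^ m : ℕ) : ℝ) := by exact_mod_cast hsum
    _ = 2 ^ m := by push_cast; ring

end SignRatioAux

namespace SignRatioAux

open MeasureTheory

variable {Ω : Type*} [mΩ : MeasurableSpace Ω] {m : ℕ}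

/-- the sign vector map -/
def Ev (ε : Fin m → Ω → ℤ) (ω : Ω) : Fin m → ℤ := fun i => ε i ω

lemma measurable_Ev (ε : Fin m → Ω → ℤ) (hmeas : ∀ i, Measurable (ε i)) :
    Measurable (Ev ε) := measurable_pi_lambda _ hmeas

lemma measurableSet_all (A : Set (Fin m → ℤ)) : MeasurableSet A :=
  (Set.to_countable A).measurableSet

lemma atom_eq (ε : Fin m → Ω → ℤ) (u : Fin m → ℤ) :
    Ev ε ⁻¹' {u} = ⋂ i, ε i ⁻¹' {u i} := by
  ext ω
  simp only [Set.mem_preimage, Set.mem_singleton_iff, Set.mem_iInter, funext_iff]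
  rfl

open scoped ENNReal

variable (P : Measure Ω) [IsProbabilityMeasure P] (ε : Fin m → Ω → ℤ)

lemma P_atom (hindep : ProbabilityTheory.iIndepFun ε P)
    (hplus : ∀ i, P (ε i ⁻¹' {1}) = 1 / 2) (hminus : ∀ i, P (ε i ⁻¹' {-1}) = 1 / 2)
    (u : Fin m → ℤ) (hu : u ∈ Sgn m) :
    P (Ev ε ⁻¹' {u}) = (1 / 2 : ℝ≥0∞) ^ m := by
  rw [atom_eq]
  rw [hindep.meas_iInter (fun i => ⟨{u i}, measurableSet_singleton _, rfl⟩)]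
  have h : ∀ i : Fin m, P (ε i ⁻¹' {u i}) = 1 / 2 := by
    intro i
    rcases mem_Sgn_iff.1 hu i with h | h <;> rw [h]
    · exact hminus i
    · exact hplus i
  rw [Finset.prod_congr rfl (fun i _ => h i), Finset.prod_const, Finset.card_univ,
    Fintype.card_fin]

lemma P_bad (hmeas : ∀ i, Measurable (ε i))
    (hplus : ∀ i, P (ε i ⁻¹' {1}) = 1 / 2) (hminus : ∀ i, P (ε i ⁻¹' {-1}) = 1 / 2) :
    P ((⋃ u ∈ Sgn m, Ev ε ⁻¹' {u})ᶜ) = 0 := by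
  have hsub : (⋃ u ∈ Sgn m, Ev ε ⁻¹' {u})ᶜ ⊆ ⋃ i, (ε i ⁻¹' {-1, 1})ᶜ := by
    intro ω hω
    by_contra h
    simp only [Set.mem_iUnion, Set.mem_compl_iff, not_exists, not_not] at h
    apply hω
    have hu : Ev ε ω ∈ Sgn m := by
      rw [mem_Sgn_iff]
      intro i
      have := h i
      simpa [Ev] using this
    exact Set.mem_biUnion hu rfl
  apply measure_mono_null hsub
  apply measure_iUnion_null
  intro i
  have hdisj : Disjoint (ε i ⁻¹' {-1}) (ε i ⁻¹' {1}) := by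
    rw [Set.disjoint_left]
    intro ω h1 h2
    simp only [Set.mem_preimage, Set.mem_singleton_iff] at h1 h2
    rw [h1] at h2
    norm_num at h2
  have h1 : P (ε i ⁻¹' {-1, 1}) = 1 := by
    rw [show ({-1, 1} : Set ℤ) = {-1} ∪ {1} by ext x; simp [or_comm], Set.preimage_union,
      measure_union hdisj (hmeas i (measurableSet_singleton _)), hplus i, hminus i,
      ENNReal.add_halves]
  rw [prob_compl_eq_zero_iff (hmeas i ((Set.to_countable _).measurableSet))]
  exact h1

lemma setIntegral_comp (hmeas : ∀ i, Measurable (ε i))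
    (hindep : ProbabilityTheory.iIndepFun ε P)
    (hplus : ∀ i, P (ε i ⁻¹' {1}) = 1 / 2) (hminus : ∀ i, P (ε i ⁻¹' {-1}) = 1 / 2)
    (H : (Fin m → ℤ) → ℝ) (A : Set (Fin m → ℤ)) :
    ∫ ω in Ev ε ⁻¹' A, H (Ev ε ω) ∂P
      = ∑ u ∈ Sgn m, A.indicator (fun u => ((2 : ℝ)⁻¹) ^ m * H u) u := by
  classical
  have hEm := measurable_Ev ε hmeas
  have hae : Ev ε ⁻¹' A =ᵐ[P]
      (((Ev ε ⁻¹' A) ∩ (⋃ u ∈ Sgn m, Ev ε ⁻¹' {u})) : Set Ω) := by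
    rw [MeasureTheory.ae_eq_set]
    constructor
    · apply measure_mono_null (t := (⋃ u ∈ Sgn m, Ev ε ⁻¹' {u})ᶜ) ?_
        (P_bad P ε hmeas hplus hminus)
      intro ω hω hU'
      exact hω.2 ⟨hω.1, hU'⟩
    · have h : ((Ev ε ⁻¹' A) ∩ (⋃ u ∈ Sgn m, Ev ε ⁻¹' {u})) \ (Ev ε ⁻¹' A) = ∅ := by
        ext ω
        simp only [Set.mem_diff, Set.mem_inter_iff, Set.mem_empty_iff_false, iff_false, not_and]
        intro h1 h2
        exact absurd h1.1 h2
      rw [h]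
      exact measure_empty
  rw [setIntegral_congr_set hae]
  have hUnion : (Ev ε ⁻¹' A) ∩ (⋃ u ∈ Sgn m, Ev ε ⁻¹' {u})
      = ⋃ u ∈ Sgn m, ((Ev ε ⁻¹' A) ∩ Ev ε ⁻¹' {u}) := Set.inter_iUnion₂ _ _
  rw [hUnion]
  rw [integral_biUnion_finset (Sgn m)
    (fun u _ => (hEm (measurableSet_all A)).inter (hEm (measurableSet_singleton u)))
    ?_ ?_]
  · apply Finset.sum_congr rfl
    intro u hu
    by_cases hA : u ∈ A
    · have hseq : (Ev ε ⁻¹' A) ∩ Ev ε ⁻¹' {u} = Ev ε ⁻¹' {u} := by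
        ext ω
        constructor
        · exact fun h => h.2
        · intro h
          have h' : Ev ε ω = u := h
          exact ⟨by rw [Set.mem_preimage, h']; exact hA, h⟩
      rw [hseq, setIntegral_congr_fun (hEm (measurableSet_singleton u))
        (fun ω hω => by show H (Ev ε ω) = H u; rw [show Ev ε ω = u from hω]),
        setIntegral_const, measureReal_def, P_atom P ε hindep hplus hminus u hu,
        Set.indicator_of_mem hA]
      simp only [measureReal_def, one_div, ENNReal.toReal_pow, ENNReal.toReal_inv, ENNReal.toReal_ofNat,
        smul_eq_mul]
    · have hseq : (Ev ε ⁻¹' A) ∩ Ev ε ⁻¹' {u} = ∅ := by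
        ext ω
        simp only [Set.mem_inter_iff, Set.mem_preimage, Set.mem_singleton_iff,
          Set.mem_empty_iff_false, iff_false, not_and]
        intro h1 h2
        rw [← h2] at hA
        exact hA h1
      rw [hseq, Set.indicator_of_notMem hA]
      simp
  · intro u hu u' hu' huu'
    simp only [Function.onFun]
    rw [Set.disjoint_left]
    intro ω h1 h2
    exact huu' (by rw [← show Ev ε ω = u from h1.2, show Ev ε ω = u' from h2.2])
  · intro u _
    have heq : Set.EqOn (fun ω => H (Ev ε ω)) (fun _ => H u)
        ((Ev ε ⁻¹' A) ∩ Ev ε ⁻¹' {u}) := by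
      intro ω hω
      show H (Ev ε ω) = H u
      rw [show Ev ε ω = u from hω.2]
    rw [IntegrableOn, integrable_congr (ae_restrict_of_forall_mem
      ((hEm (measurableSet_all A)).inter (hEm (measurableSet_singleton u))) heq)]
    exact integrableOn_const (measure_ne_top _ _)

lemma integrable_comp (hmeas : ∀ i, Measurable (ε i))
    (hplus : ∀ i, P (ε i ⁻¹' {1}) = 1 / 2) (hminus : ∀ i, P (ε i ⁻¹' {-1}) = 1 / 2)
    (H : (Fin m → ℤ) → ℝ) :
    Integrable (fun ω => H (Ev ε ω)) P := by
  classical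
  apply Integrable.mono' (integrable_const (∑ u ∈ Sgn m, |H u|))
    ((measurable_of_countable H).comp (measurable_Ev ε hmeas)).aestronglyMeasurable
  have hU : (⋃ u ∈ Sgn m, Ev ε ⁻¹' {u}) ∈ ae P :=
    mem_ae_iff.2 (P_bad P ε hmeas hplus hminus)
  filter_upwards [hU] with ω hω
  simp only [Set.mem_iUnion, Set.mem_preimage, Set.mem_singleton_iff] at hω
  obtain ⟨u, hu, huω⟩ := hω
  show ‖H (Ev ε ω)‖ ≤ _
  rw [huω, Real.norm_eq_abs]
  exact Finset.single_le_sum (fun v _ => abs_nonneg (H v)) hu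

end SignRatioAux

namespace SignRatioAux
lemma vp_zero {m : ℕ} (u : Fin m → ℤ) : vp u 0 = 0 := by simp [vp]
end SignRatioAux


open SignRatioAux

/-- **The reversed-time sign ratio process is a supermartingale, and optional
stopping gives `E[M_T] ≤ 1`.**
Let `ε_1, …, ε_m` be i.i.d. random variables uniform on `{−1, +1}`, and for
`0 ≤ j ≤ m` let `V⁺(j) = #{i ≤ j : ε_i = +1}` and `V⁻(j) = j − V⁺(j)`.  For
`0 ≤ i ≤ m` define `M_i = V⁺(m−i) / (1 + V⁻(m−i))` and let `F_i` be the σ-algebra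
generated by `V⁺(m−i)` together with `ε_{m−i+1}, …, ε_m` (1-based indices, i.e. the
0-based entries `ε_j` with `m − i ≤ j`).  Then `(M_i)_{0 ≤ i ≤ m}` is a
supermartingale with respect to the filtration `(F_i)`, and for every stopping time
`T` with respect to `(F_i)` taking values in `{0, …, m}`, `E[ M_T ] ≤ 1`. -/
theorem sign_ratio_supermartingale_optional_stopping
    {Ω : Type*} [mΩ : MeasurableSpace Ω]
    (P : Measure Ω) [IsProbabilityMeasure P] (m : ℕ)
    (ε : Fin m → Ω → ℤ) (hmeas : ∀ i, Measurable (ε i))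
    (hindep : ProbabilityTheory.iIndepFun ε P)
    (hplus : ∀ i, P (ε i ⁻¹' {1}) = 1 / 2)
    (hminus : ∀ i, P (ε i ⁻¹' {-1}) = 1 / 2)
    (F : Filtration ℕ mΩ)
    (hF : ∀ i, F i =
      MeasurableSpace.comap (fun ω => Vplus ε (m - i) ω) inferInstance ⊔
        ⨆ (j : Fin m) (_ : m - i ≤ (j : ℕ)),
          MeasurableSpace.comap (ε j) inferInstance)
    (M : ℕ → Ω → ℝ)
    (hM : M = fun i ω =>
      (Vplus ε (m - i) ω : ℝ) / (1 + (Vminus ε (m - i) ω : ℝ))) :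
    Supermartingale M F P ∧
      ∀ T : Ω → ℕ, IsStoppingTime F (fun ω => (T ω : WithTop ℕ)) → (∀ ω, T ω ≤ m) →
        ∫ ω, stoppedValue M (fun ω => (T ω : WithTop ℕ)) ω ∂P ≤ 1 := by
  classical
  have hMrw : ∀ k, M k = fun ω => ((vp (Ev ε ω) (m - k) : ℝ) /
      (1 + (((m - k) - vp (Ev ε ω) (m - k) : ℕ) : ℝ))) := by
    intro k
    rw [hM]
    rfl
  have hMapp : ∀ k ω, M k ω = (Vplus ε (m - k) ω : ℝ) /
      (1 + (((m - k) - Vplus ε (m - k) ω : ℕ) : ℝ)) := by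
    intro k ω
    rw [hM]
    rfl
  -- integrability
  have hint : ∀ k, Integrable (M k) P := by
    intro k
    rw [hMrw k]
    exact integrable_comp P ε hmeas hplus hminus
      (fun u => (vp u (m - k) : ℝ) / (1 + (((m - k) - vp u (m - k) : ℕ) : ℝ)))
  -- adaptedness
  have hVmeas : ∀ k, Measurable[F k] (fun ω => Vplus ε (m - k) ω) := by
    intro k
    have hle : MeasurableSpace.comap (fun ω => Vplus ε (m - k) ω)
        (inferInstance : MeasurableSpace ℕ) ≤ F k := by
      rw [hF k]; exact le_sup_left
    intro s hs
    exact hle _ ⟨s, hs, rfl⟩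
  have hadp : Adapted F M := by
    intro k
    have h : M k = (fun v : ℕ => (v : ℝ) / (1 + (((m - k) - v : ℕ) : ℝ)))
        ∘ (fun ω => Vplus ε (m - k) ω) := by rw [hM]; rfl
    rw [h]
    exact (measurable_of_countable _).comp (hVmeas k)
  -- the candidate conditional expectation
  set G : ℕ → Ω → ℝ := fun k ω => if m ≤ k then 0 else gf (m - k) (Vplus ε (m - k) ω) with hG
  have hGcomp : ∀ k, G k = fun ω =>
      (fun u => if m ≤ k then 0 else gf (m - k) (vp u (m - k))) (Ev ε ω) := fun k => rfl
  have hGint : ∀ k, Integrable (G k) P := by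
    intro k
    rw [hGcomp k]
    exact integrable_comp P ε hmeas hplus hminus
      (fun u => if m ≤ k then 0 else gf (m - k) (vp u (m - k)))
  have hGmeasF : ∀ k, StronglyMeasurable[F k] (G k) := by
    intro k
    by_cases hk : m ≤ k
    · have h : G k = fun _ => (0 : ℝ) := by funext ω; simp [hG, hk]
      rw [h]; exact stronglyMeasurable_const
    · have h : G k = (fun v : ℕ => gf (m - k) v) ∘ (fun ω => Vplus ε (m - k) ω) := by
        funext ω; simp [hG, hk]
      rw [h]
      exact ((measurable_of_countable _).comp (hVmeas k)).stronglyMeasurable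
  -- pointwise domination
  have hGle : ∀ k ω, G k ω ≤ M k ω := by
    intro k ω
    simp only [hG]
    by_cases hk : m ≤ k
    · rw [if_pos hk, hMapp]
      positivity
    · rw [if_neg hk, hMapp]
      have hvle : Vplus ε (m - k) ω ≤ m - k := vp_le (Ev ε ω) (m - k)
      rw [gf]
      by_cases hv : Vplus ε (m - k) ω = m - k
      · rw [if_pos hv, hv, Nat.sub_self]
        have h1 : (1 : ℝ) ≤ ((m - k : ℕ) : ℝ) := by
          have h2 : 1 ≤ m - k := by omega
          exact_mod_cast h2
        have e : (1 : ℝ) + ((0 : ℕ) : ℝ) = 1 := by norm_num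
        rw [e, div_one]
        linarith
      · rw [if_neg hv, Nat.cast_sub hvle]
        ring_nf
        exact le_refl _
  -- G k is the conditional expectation of M (k+1)
  have hcond : ∀ k, G k =ᵐ[P] P[M (k + 1)|F k] := by
    intro k
    by_cases hk : m ≤ k
    · have hM0 : M (k + 1) = (0 : Ω → ℝ) := by
        funext ω
        rw [hMapp, show m - (k + 1) = 0 by omega,
          show Vplus ε 0 ω = 0 from vp_zero (Ev ε ω)]
        simp
      have hG0 : G k = (0 : Ω → ℝ) := by funext ω; simp [hG, hk]
      rw [hG0, hM0, condExp_zero]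
    · push_neg at hk
      have hn1 : 1 ≤ m - k := by omega
      have hn2 : m - k ≤ m := by omega
      have hmk1 : m - (k + 1) = m - k - 1 := by omega
      refine ae_eq_condExp_of_forall_setIntegral_eq (F.le k) (hint (k + 1))
        (fun s _ _ => (hGint k).integrableOn) ?_
        ((hGmeasF k).aestronglyMeasurable)
      intro s hs _
      have hFsub : F k ≤ MeasurableSpace.comap (fun ω => psi (m - k) (Ev ε ω)) ⊤ := by
        rw [hF k]
        apply sup_le
        · rintro s' ⟨A, -, rfl⟩
          exact ⟨Prod.fst ⁻¹' A, trivial, rfl⟩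
        · apply iSup_le; intro j; apply iSup_le; intro hj
          rintro s' ⟨A, -, rfl⟩
          refine ⟨(fun p : ℕ × (Fin m → ℤ) => p.2 j) ⁻¹' A, trivial, ?_⟩
          ext ω
          simp only [Set.mem_preimage, psi]
          rw [if_pos hj]
          rfl
      obtain ⟨B, -, hBs⟩ := hFsub s hs
      rw [← hBs]
      have hpre : (fun ω => psi (m - k) (Ev ε ω)) ⁻¹' B
          = Ev ε ⁻¹' (psi (m - k) ⁻¹' B) := rfl
      rw [hpre]
      have hGrw : G k = fun ω => (fun u => gf (m - k) (vp u (m - k))) (Ev ε ω) := by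
        funext ω
        simp only [hG, if_neg (not_le.2 hk)]
        rfl
      have hMrw1 : M (k + 1) = fun ω =>
          (fun u => (vp u (m - k - 1) : ℝ) /
            (1 + ((m - k - 1 - vp u (m - k - 1) : ℕ) : ℝ))) (Ev ε ω) := by
        rw [hMrw (k + 1)]
        simp only [hmk1]
      rw [hGrw, hMrw1, setIntegral_comp P ε hmeas hindep hplus hminus,
        setIntegral_comp P ε hmeas hindep hplus hminus]
      -- reduce to the combinatorial fiber identity
      have hind : ∀ H : (Fin m → ℤ) → ℝ,
          ∑ u ∈ Sgn m, (psi (m - k) ⁻¹' B).indicator (fun u => (2 : ℝ)⁻¹ ^ m * H u) u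
            = (2 : ℝ)⁻¹ ^ m * ∑ u ∈ (Sgn m).filter (fun u => psi (m - k) u ∈ B), H u := by
        intro H
        rw [Finset.sum_filter, Finset.mul_sum]
        apply Finset.sum_congr rfl
        intro u _
        by_cases h : psi (m - k) u ∈ B
        · rw [Set.indicator_of_mem (show u ∈ psi (m - k) ⁻¹' B from h), if_pos h]
        · rw [Set.indicator_of_notMem (show u ∉ psi (m - k) ⁻¹' B from h), if_neg h, mul_zero]
      rw [hind, hind]
      congr 1
      -- fiberwise decomposition
      rw [← Finset.sum_fiberwise_of_maps_to
        (fun u (hu : u ∈ (Sgn m).filter (fun u => psi (m - k) u ∈ B)) =>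
          Finset.mem_image_of_mem (psi (m - k)) hu)
        (fun u => gf (m - k) (vp u (m - k))),
        ← Finset.sum_fiberwise_of_maps_to
        (fun u (hu : u ∈ (Sgn m).filter (fun u => psi (m - k) u ∈ B)) =>
          Finset.mem_image_of_mem (psi (m - k)) hu)
        (fun u => (vp u (m - k - 1) : ℝ) /
          (1 + ((m - k - 1 - vp u (m - k - 1) : ℕ) : ℝ)))]
      apply Finset.sum_congr rfl
      intro a ha
      have haB : ∀ u, psi (m - k) u = a → psi (m - k) u ∈ B := by
        intro u hu
        obtain ⟨u₀, hu₀, hua⟩ := Finset.mem_image.1 ha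
        rw [Finset.mem_filter] at hu₀
        rw [hu, ← hua]
        exact hu₀.2
      have hTfil : ((Sgn m).filter (fun u => psi (m - k) u ∈ B)).filter
            (fun u => psi (m - k) u = a)
          = (Sgn m).filter (fun u => psi (m - k) u = a) := by
        rw [Finset.filter_filter]
        apply Finset.filter_congr
        intro u _
        constructor
        · exact fun h => h.2
        · exact fun h => ⟨haB u h, h⟩
      rw [hTfil]
      exact (fiber_sum hn1 hn2 a).symm
  -- supermartingale
  have hsuper : Supermartingale M F P := by
    apply supermartingale_nat (fun k => (hadp k).stronglyMeasurable) hint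
    intro k
    filter_upwards [hcond k] with ω hω
    rw [← hω]
    exact hGle k ω
  refine ⟨hsuper, ?_⟩
  -- E[M 0] ≤ 1
  have hM0le : ∫ ω, M 0 ω ∂P ≤ 1 := by
    have h0 : M 0 = fun ω =>
        (fun u => (vp u m : ℝ) / (1 + ((m - vp u m : ℕ) : ℝ))) (Ev ε ω) := hMrw 0
    have hI := setIntegral_comp P ε hmeas hindep hplus hminus
      (fun u => (vp u m : ℝ) / (1 + ((m - vp u m : ℕ) : ℝ))) Set.univ
    rw [h0, ← setIntegral_univ, show (Set.univ : Set Ω) = Ev ε ⁻¹' Set.univ from rfl, hI]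
    simp only [Set.indicator_univ]
    rw [← Finset.mul_sum]
    have hpos : (0 : ℝ) < (2 : ℝ)⁻¹ ^ m := by positivity
    calc (2 : ℝ)⁻¹ ^ m * ∑ u ∈ Sgn m, (vp u m : ℝ) / (1 + ((m - vp u m : ℕ) : ℝ))
        ≤ (2 : ℝ)⁻¹ ^ m * 2 ^ m := by
          apply mul_le_mul_of_nonneg_left sum_M0_le (le_of_lt hpos)
      _ = 1 := by
          rw [← mul_pow]
          norm_num
  intro T hT hTle
  have hsub := hsuper.neg
  have h := hsub.expected_stoppedValue_mono (isStoppingTime_const F 0) hT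
    (fun ω => WithTop.coe_le_coe.2 (Nat.zero_le _)) (N := m) (fun ω => WithTop.coe_le_coe.2 (hTle ω))
  have e2 : ∀ τ : Ω → WithTop ℕ, stoppedValue (-M) τ = fun ω => - stoppedValue M τ ω := by
    intro τ; funext ω; simp [stoppedValue]
  rw [e2, e2, integral_neg, integral_neg] at h
  have h' : ∫ ω, stoppedValue M (fun ω => (T ω : WithTop ℕ)) ω ∂P ≤ ∫ ω, stoppedValue M (fun _ => ((0 : ℕ) : WithTop ℕ)) ω ∂P := by
    exact neg_le_neg_iff.1 h
  have e3 : stoppedValue M (fun _ => ((0 : ℕ) : WithTop ℕ)) = M 0 := rfl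
  rw [e3] at h'
  exact h'.trans hM0le
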